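/- Let Ω ⊆ ℝⁿ be open and satisfy the ε-ball condition. Then Ω satisfies the α-cone property for α = f⁻¹(ε), where f(α) = 2α/cos α. That is, for every x ∈ ∂Ω there is a unit vector ξ_x (namely ξ_x = −d_x) such that, for every y ∈ B_α(x) ∩ Ω, the open cone C_α(y, ξ_x) = {z ∈ B_α(y) : ‖z − y‖ cos α < ⟨z − y, ξ_x⟩} is contained in Ω. -/
import Mathlib


open Metric
open scoped RealInnerProductSpace

set_option maxHeartbeats 4000000

/-- If `Ω` satisfies the ε-ball condition, then `Ω` satisfies the `α`-cone property with
`α = f⁻¹(ε)`, `f(α) = 2α/cos α`: for every `x ∈ ∂Ω`, the unit vector `ξ_x = −d_x` is such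
that for any `y ∈ B_α(x) ∩ Ω`, the open cone
`C_α(y, ξ_x) = {z ∈ B_α(y) : ‖z − y‖ cos α < ⟨z − y, ξ_x⟩}` is contained in `Ω`. -/
theorem stmt_15 {n : ℕ} (hn : 2 ≤ n) (ε : ℝ) (hε : 0 < ε)
    (Ω : Set (EuclideanSpace ℝ (Fin n))) (hΩ : IsOpen Ω)
    (d : EuclideanSpace ℝ (Fin n) → EuclideanSpace ℝ (Fin n))
    (hball : ∀ x ∈ frontier Ω, ‖d x‖ = 1 ∧
      ball (x - ε • d x) ε ⊆ Ω ∧ ball (x + ε • d x) ε ⊆ (closure Ω)ᶜ)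
    (α : ℝ) (hα : α ∈ Set.Ioo 0 (Real.pi / 2)) (hfα : 2 * α / Real.cos α = ε) :
    ∀ x ∈ frontier Ω, ∀ y ∈ ball x α ∩ Ω,
      {z ∈ ball y α | ‖z - y‖ * Real.cos α < ⟪z - y, -(d x)⟫} ⊆ Ω := by
  obtain ⟨hα0, hαπ⟩ := hα
  have hcos : 0 < Real.cos α :=
    Real.cos_pos_of_mem_Ioo ⟨by linarith [Real.pi_pos], hαπ⟩
  rw [div_eq_iff hcos.ne'] at hfα
  -- hfα : 2 * α = ε * Real.cos α
  intro x hx y hy z hz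
  obtain ⟨hyx, hyΩ⟩ := hy
  obtain ⟨hzy, hcone⟩ := hz
  by_contra hzΩ
  set u := z - y with hu
  have hux : ⟪u, d x⟫ < -(‖u‖ * Real.cos α) := by
    have h := hcone
    rw [inner_neg_right] at h
    linarith
  have hu0 : 0 < ‖u‖ := by
    rcases eq_or_ne u 0 with h | h
    · rw [h] at hux; simp at hux
    · exact norm_pos_iff.mpr h
  have hru : ‖u‖ < α := by
    have := mem_ball.mp hzy; rwa [dist_eq_norm] at this
  have hyxn : ‖y - x‖ < α := by
    have := mem_ball.mp hyx; rwa [dist_eq_norm] at this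
  -- the first exit time along the segment from y to z
  set T : Set ℝ := Set.Icc 0 1 ∩ {t | y + t • u ∉ Ω} with hT
  have hTclosed : IsClosed T := by
    apply IsClosed.inter isClosed_Icc
    have h : {t : ℝ | y + t • u ∉ Ω} = (fun t : ℝ => y + t • u) ⁻¹' Ωᶜ := rfl
    rw [h]
    exact (isClosed_compl_iff.mpr hΩ).preimage (by fun_prop)
  have hTne : T.Nonempty := ⟨1, ⟨zero_le_one, le_refl 1⟩, by simpa [hu] using hzΩ⟩
  have hTbdd : BddBelow T := ⟨0, fun t ht => ht.1.1⟩
  set t₀ := sInf T with ht₀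
  have ht₀T : t₀ ∈ T := hTclosed.csInf_mem hTne hTbdd
  set w := y + t₀ • u with hw
  have hwΩ : w ∉ Ω := ht₀T.2
  have ht₀0 : 0 < t₀ := by
    rcases lt_or_eq_of_le ht₀T.1.1 with h | h
    · exact h
    · exfalso; apply hwΩ; rw [hw, ← h]; simpa using hyΩ
  have hseg : ∀ t : ℝ, 0 ≤ t → t < t₀ → y + t • u ∈ Ω := by
    intro t ht0 htt
    by_contra hnot
    have hmem : t ∈ T := ⟨⟨ht0, le_trans htt.le ht₀T.1.2⟩, hnot⟩
    exact absurd (csInf_le hTbdd hmem) (not_le.mpr htt)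
  have hwcl : w ∈ closure Ω := by
    have hcont : Continuous fun t : ℝ => y + t • u := by fun_prop
    have htend : Filter.Tendsto (fun t : ℝ => y + t • u)
        (nhdsWithin t₀ (Set.Iio t₀)) (nhds w) := by
      apply Filter.Tendsto.mono_left _ nhdsWithin_le_nhds
      simpa [hw] using hcont.tendsto t₀
    apply mem_closure_of_tendsto htend
    filter_upwards [Ioo_mem_nhdsLT_of_mem ⟨ht₀0, le_refl t₀⟩] with t ht
    exact hseg t ht.1.le ht.2
  have hwfr : w ∈ frontier Ω := by
    rw [frontier, hΩ.interior_eq]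
    exact ⟨hwcl, hwΩ⟩
  have ht₀1 : t₀ ≤ 1 := ht₀T.1.2
  clear_value T t₀ u w
  obtain ⟨hdx1, hxin, hxout⟩ := hball x hx
  obtain ⟨hdw1, hwin, hwout⟩ := hball w hwfr
  -- Step A: ⟪u, d w⟫ ≥ 0
  have hudw : 0 ≤ ⟪u, d w⟫ := by
    by_contra hneg
    push_neg at hneg
    set σ := min t₀ (ε * (-⟪u, d w⟫) / ‖u‖ ^ 2) with hσ
    have hσ0 : 0 < σ :=
      lt_min ht₀0 (div_pos (mul_pos hε (by linarith)) (by positivity))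
    have hσt : σ ≤ t₀ := min_le_left _ _
    have hq : y + (t₀ - σ) • u ∈ Ω := hseg _ (by linarith) (by linarith)
    have hqout : ε ≤ ‖(y + (t₀ - σ) • u) - (w + ε • d w)‖ := by
      by_contra hlt
      push_neg at hlt
      exact hwout (mem_ball.mpr (by rwa [dist_eq_norm])) (subset_closure hq)
    have hkey : ε ≤ ‖σ • u + ε • d w‖ := by
      have heq : (y + (t₀ - σ) • u) - (w + ε • d w) = -(σ • u + ε • d w) := by
        rw [hw]; module
      rwa [heq, norm_neg] at hqout
    have hexp : ‖σ • u + ε • d w‖ ^ 2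
        = σ ^ 2 * ‖u‖ ^ 2 + 2 * (σ * ε * ⟪u, d w⟫) + ε ^ 2 := by
      rw [norm_add_sq_real, norm_smul, norm_smul, real_inner_smul_left,
        real_inner_smul_right, hdw1, Real.norm_eq_abs, Real.norm_eq_abs,
        abs_of_pos hσ0, abs_of_pos hε]
      ring
    have hσb : σ * ‖u‖ ^ 2 ≤ ε * (-⟪u, d w⟫) := by
      have hm := min_le_right t₀ (ε * (-⟪u, d w⟫) / ‖u‖ ^ 2)
      calc σ * ‖u‖ ^ 2 ≤ (ε * (-⟪u, d w⟫) / ‖u‖ ^ 2) * ‖u‖ ^ 2 := by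
            nlinarith [sq_nonneg ‖u‖]
        _ = ε * (-⟪u, d w⟫) := by field_simp
    nlinarith [mul_pos hσ0 hε, norm_nonneg (σ • u + ε • d w)]
  -- Step B: disjoint balls give a center-distance bound
  have hdisj : ∀ c₁ c₂ : EuclideanSpace ℝ (Fin n), ball c₁ ε ⊆ Ω →
      ball c₂ ε ⊆ (closure Ω)ᶜ → 2 * ε ≤ ‖c₂ - c₁‖ := by
    intro c₁ c₂ h1 h2
    by_contra hlt
    push_neg at hlt
    have hdlt : dist c₁ c₂ < 2 * ε := by
      rw [dist_eq_norm, ← norm_neg]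
      simpa [neg_sub] using hlt
    have hm1 : midpoint ℝ c₁ c₂ ∈ ball c₁ ε := by
      rw [mem_ball, dist_midpoint_left, Real.norm_two]
      linarith
    have hm2 : midpoint ℝ c₁ c₂ ∈ ball c₂ ε := by
      rw [mem_ball, dist_midpoint_right, Real.norm_two]
      linarith
    exact h2 hm2 (subset_closure (h1 hm1))
  have hA1 : 2 * ε ≤ ‖(w - x) + ε • (d x + d w)‖ := by
    have h := hdisj _ _ hxin hwout
    have heq : (w + ε • d w) - (x - ε • d x) = (w - x) + ε • (d x + d w) := by
      module
    rwa [heq] at h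
  have hA2 : 2 * ε ≤ ‖(w - x) - ε • (d x + d w)‖ := by
    have h := hdisj _ _ hwin hxout
    have heq : (x + ε • d x) - (w - ε • d w) = -((w - x) - ε • (d x + d w)) := by
      module
    rwa [heq, norm_neg] at h
  have hpar1 := parallelogram_law_with_norm ℝ (w - x) (ε • (d x + d w))
  have hpar2 := parallelogram_law_with_norm ℝ (d x) (d w)
  have hnsm : ‖ε • (d x + d w)‖ = ε * ‖d x + d w‖ := by
    rw [norm_smul, Real.norm_eq_abs, abs_of_pos hε]
  have hB2 : ‖ε • (d x + d w)‖ ^ 2 = ε ^ 2 * ‖d x + d w‖ ^ 2 := by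
    rw [hnsm]; ring
  have hsq1 : 4 * ε ^ 2 ≤ ‖(w - x) + ε • (d x + d w)‖ ^ 2 := by
    nlinarith [norm_nonneg ((w - x) + ε • (d x + d w))]
  have hsq2 : 4 * ε ^ 2 ≤ ‖(w - x) - ε • (d x + d w)‖ ^ 2 := by
    nlinarith [norm_nonneg ((w - x) - ε • (d x + d w))]
  have hdd : ε ^ 2 * ‖d x - d w‖ ^ 2 ≤ ‖w - x‖ ^ 2 := by
    rw [hdx1, hdw1] at hpar2
    nlinarith [hsq1, hsq2, hpar1, hpar2, hB2, pow_pos hε 2]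
  have hwy : ‖w - y‖ ≤ ‖u‖ := by
    have heq : w - y = t₀ • u := by rw [hw]; module
    rw [heq, norm_smul, Real.norm_eq_abs, abs_of_pos ht₀0]
    nlinarith [ht₀1]
  have htri : ‖w - x‖ ≤ ‖w - y‖ + ‖y - x‖ := by
    rw [← dist_eq_norm, ← dist_eq_norm, ← dist_eq_norm]
    exact dist_triangle w y x
  have hwx : ‖w - x‖ < 2 * α := by linarith
  have h4 : ‖w - x‖ ^ 2 < (ε * Real.cos α) ^ 2 := by
    nlinarith [norm_nonneg (w - x)]
  have h5 : ‖d x - d w‖ ^ 2 < Real.cos α ^ 2 := by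
    nlinarith [hdd, h4, pow_pos hε 2]
  have hdwx : ‖d x - d w‖ < Real.cos α := by
    nlinarith [norm_nonneg (d x - d w), h5, hcos]
  have hcs : ⟪u, d w - d x⟫ ≤ ‖u‖ * ‖d w - d x‖ := real_inner_le_norm _ _
  have hsplit : ⟪u, d w⟫ = ⟪u, d x⟫ + ⟪u, d w - d x⟫ := by
    rw [inner_sub_right]; ring
  rw [← norm_neg, neg_sub] at hdwx
  have hmul : ‖u‖ * ‖d w - d x‖ < ‖u‖ * Real.cos α :=
    mul_lt_mul_of_pos_left hdwx hu0
  linarith
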